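/- Let F be a field of characteristic 2, let m be an odd positive integer, and let ω ∈ F be a primitive m-th root of unity. Then for every multivariate polynomial P ∈ F[X₁,…,Xₙ] of total degree strictly less than m and all vectors x, v ∈ Fⁿ, we have ∑_{i=1}^{m} P(ω^i·x₁ + v₁, …, ω^i·xₙ + vₙ) = P(v₁, …, vₙ). (This is the key interpolation identity underlying the Cook–Mertz Tree Evaluation algorithm.) -/

import Mathlib

open Polynomial Finset

lemma key (F : Type*) [Field F] (hchar : ringChar F = 2) (m : ℕ)
    (hm : 0 < m) (hodd : Odd m) (ω : F) (hω : IsPrimitiveRoot ω m)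
    (Q : Polynomial F) (hQ : Q.natDegree < m) :
    ∑ i ∈ Finset.range m, Q.eval (ω ^ (i + 1)) = Q.eval 0 := by
  have hm1 : (m : F) = 1 := by
    obtain ⟨q, rfl⟩ := hodd
    haveI : CharP F 2 := hchar ▸ ringChar.charP F
    push_cast
    rw [show ((2:F)) = ((2:ℕ):F) by norm_num, CharP.cast_eq_zero F 2]
    ring
  have hsum : ∀ k < m, ∑ i ∈ Finset.range m, (ω ^ (i + 1)) ^ k
      = if k = 0 then 1 else 0 := by
    intro k hk
    rcases Nat.eq_zero_or_pos k with rfl | hkpos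
    · simp [hm1]
    · have hne : ω ^ k ≠ 1 := hω.pow_ne_one_of_pos_of_lt hkpos.ne' hk
      have hgeom : ∑ i ∈ Finset.range m, (ω ^ k) ^ i = 0 := by
        have := geom_sum_mul (ω ^ k) m
        rw [← pow_mul, mul_comm k m, pow_mul, hω.pow_eq_one, one_pow, sub_self] at this
        rcases mul_eq_zero.mp this with h | h
        · exact h
        · exact absurd (sub_eq_zero.mp h) hne
      simp only [if_neg hkpos.ne']
      calc ∑ i ∈ Finset.range m, (ω ^ (i + 1)) ^ k
          = ω ^ k * ∑ i ∈ Finset.range m, (ω ^ k) ^ i := by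
            rw [Finset.mul_sum]; congr 1; ext i; ring
        _ = 0 := by rw [hgeom, mul_zero]
  have heval : ∀ t : F, Q.eval t = ∑ k ∈ Finset.range m, Q.coeff k * t ^ k := by
    intro t
    exact Polynomial.eval_eq_sum_range' hQ t
  rw [Finset.sum_congr rfl fun i _ => heval _, Finset.sum_comm]
  rw [heval 0]
  refine Finset.sum_congr rfl fun k hk => ?_
  rw [← Finset.mul_sum, hsum k (Finset.mem_range.mp hk)]
  rcases Nat.eq_zero_or_pos k with rfl | hkpos
  · simp
  · simp [if_neg hkpos.ne', zero_pow hkpos.ne']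

theorem stmt_2 (F : Type*) [Field F] (hchar : ringChar F = 2) (m : ℕ)
    (hm : 0 < m) (hodd : Odd m) (ω : F) (hω : IsPrimitiveRoot ω m)
    (n : ℕ) (P : MvPolynomial (Fin n) F) (hP : P.totalDegree < m)
    (x v : Fin n → F) :
    ∑ i ∈ Finset.Icc 1 m,
        MvPolynomial.eval (fun j => ω ^ i * x j + v j) P
      = MvPolynomial.eval v P := by
  set f : Fin n → Polynomial F := fun j => Polynomial.C (x j) * Polynomial.X + Polynomial.C (v j)
    with hf
  set Q : Polynomial F := MvPolynomial.aeval f P with hQdef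
  have heval : ∀ t : F, Q.eval t = MvPolynomial.eval (fun j => t * x j + v j) P := by
    intro t
    rw [hQdef, MvPolynomial.aeval_def,
      show (Polynomial.eval t (MvPolynomial.eval₂ (algebraMap F (Polynomial F)) f P)) =
        Polynomial.evalRingHom t (MvPolynomial.eval₂ (algebraMap F (Polynomial F)) f P) from rfl,
      MvPolynomial.eval₂_comp_left]
    have h1 : (Polynomial.evalRingHom t).comp (algebraMap F (Polynomial F)) = RingHom.id F := by
      ext a; simp
    have h2 : (Polynomial.evalRingHom t) ∘ f = fun j => t * x j + v j := by
      funext j; simp [hf]; ring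
    rw [h1, h2, MvPolynomial.eval₂_id]
  have hdeg : Q.natDegree < m := by
    have : Q.natDegree ≤ P.totalDegree := by
      rw [hQdef]
      conv_lhs => rw [P.as_sum]
      rw [map_sum]
      apply Polynomial.natDegree_sum_le_of_forall_le
      intro d hd
      rw [MvPolynomial.aeval_monomial]
      refine (Polynomial.natDegree_mul_le).trans ?_
      have h1 : (algebraMap F (Polynomial F) (MvPolynomial.coeff d P)).natDegree = 0 :=
        Polynomial.natDegree_C _
      rw [h1, zero_add]
      refine le_trans ?_ (MvPolynomial.le_totalDegree hd)
      rw [Finsupp.prod, Finsupp.sum]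
      refine (Polynomial.natDegree_prod_le _ _).trans ?_
      apply Finset.sum_le_sum
      intro j _
      refine (Polynomial.natDegree_pow_le).trans ?_
      have : (f j).natDegree ≤ 1 := by
        refine (Polynomial.natDegree_add_le _ _).trans ?_
        simp [Polynomial.natDegree_C]
        exact (Polynomial.natDegree_mul_le).trans (by simp)
      simpa using Nat.mul_le_mul_left (d j) this
    omega
  have hmain := key F hchar m hm hodd ω hω Q hdeg
  rw [← Finset.Ico_add_one_right_eq_Icc, Finset.sum_Ico_eq_sum_range]
  rw [show m + 1 - 1 = m from rfl]
  calc ∑ i ∈ Finset.range m, MvPolynomial.eval (fun j => ω ^ (1 + i) * x j + v j) P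
      = ∑ i ∈ Finset.range m, Q.eval (ω ^ (i + 1)) := by
        refine Finset.sum_congr rfl fun i _ => ?_
        rw [heval, add_comm 1 i]
    _ = Q.eval 0 := hmain
    _ = MvPolynomial.eval v P := by simpa using heval 0
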